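/- For the two-node channel (D = 2, no relays), the half-duplex DF rate equals the full-duplex DF rate: R_DF^h = R_DF^f = Γ(λ₁₂P₁/N₂). For the three-node rSNR-degraded phase-fading channel (D = 3), the half-duplex DF rate is strictly smaller than the full-duplex DF rate: R_DF^h < R_DF^f, where R_DF^f = min{Γ(λ₁₂P₁/N₂), Γ((λ₁₃P₁+λ₂₃P₂)/N₃)} and R_DF^h = max_{α∈[0,1]} min{ αΓ(λ₁₂P₁/N₂), αΓ(λ₁₃P₁/N₃) + (1−α)Γ((λ₁₃P₁+λ₂₃P₂)/N₃) }. -/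
import Mathlib


/-- for D = 2 the half-duplex DF rate equals the full-duplex DF
rate Γ(λ₁₂P₁/N₂); for the three-node rSNR-degraded phase-fading channel the
half-duplex DF rate is strictly smaller than the full-duplex DF rate. -/
theorem stmt_19 (l12 l13 l23 P1 P2 N2 N3 : ℝ)
    (hl12 : 0 < l12) (hl13 : 0 < l13) (hl23 : 0 < l23)
    (hP1 : 0 < P1) (hP2 : 0 < P2) (hN2 : 0 < N2) (hN3 : 0 < N3)
    (Γ : ℝ → ℝ) (hΓ : Γ = fun x => Real.logb 2 (1 + x))
    (hdeg : l13 * P1 / N3 < l12 * P1 / N2)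
    (Rf2 Rh2 : ℝ) (hRf2 : Rf2 = Γ (l12 * P1 / N2))
    (hRh2 : Rh2 = Γ (l12 * P1 / N2))
    (Rf : ℝ)
    (hRf : Rf = min (Γ (l12 * P1 / N2)) (Γ ((l13 * P1 + l23 * P2) / N3)))
    (Rh : ℝ)
    (hRh : IsGreatest {v : ℝ | ∃ α : ℝ, 0 ≤ α ∧ α ≤ 1 ∧
      v = min (α * Γ (l12 * P1 / N2))
        (α * Γ (l13 * P1 / N3) + (1 - α) * Γ ((l13 * P1 + l23 * P2) / N3))} Rh) :
    Rh2 = Rf2 ∧ Rh < Rf := by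
  refine ⟨by rw [hRh2, hRf2], ?_⟩
  set a := l12 * P1 / N2 with ha
  set b := l13 * P1 / N3 with hb
  set c := (l13 * P1 + l23 * P2) / N3 with hc
  have hapos : 0 < a := by positivity
  have hbpos : 0 < b := by positivity
  have hbc : b < c := by
    rw [hb, hc]
    exact (div_lt_div_iff_of_pos_right hN3).mpr (by nlinarith)
  have hΓa : 0 < Γ a := by rw [hΓ]; exact Real.logb_pos one_lt_two (by linarith)
  have hΓc : 0 < Γ c := by
    rw [hΓ]; exact Real.logb_pos one_lt_two (by nlinarith [hbpos.trans hbc])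
  have hΓba : Γ b < Γ a := by
    rw [hΓ]; exact Real.logb_lt_logb one_lt_two (by linarith) (by linarith)
  have hΓbc : Γ b < Γ c := by
    rw [hΓ]; exact Real.logb_lt_logb one_lt_two (by linarith) (by linarith)
  obtain ⟨α, hα0, hα1, hv⟩ := hRh.1
  rw [hRf]
  rcases eq_or_lt_of_le hα0 with h0 | h0
  · rw [hv, ← h0]
    simp only [zero_mul, one_mul, zero_add, sub_zero, min_self]
    calc (0:ℝ) ⊓ Γ c ≤ 0 := min_le_left _ _
    _ < Γ a ⊓ Γ c := lt_min hΓa hΓc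
  · have h2 : α * Γ b + (1 - α) * Γ c < Γ c := by nlinarith
    rcases eq_or_lt_of_le hα1 with h1 | h1
    · subst h1
      rw [hv]
      simp only [one_mul, sub_self, zero_mul, add_zero]
      exact lt_min ((min_le_right _ _).trans_lt hΓba) ((min_le_right _ _).trans_lt hΓbc)
    · refine lt_min ?_ (hv.trans_lt ((min_le_right _ _).trans_lt h2))
      have : α * Γ a < Γ a := by nlinarith
      exact hv.trans_lt ((min_le_left _ _).trans_lt this)
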